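/- arXiv:1407.2285 — 4 statements merged into one kernel-verified Lean document; each statement's English description precedes it below -/
import Mathlib

section
/- Let φ be a k-linear form on ℝ^n such that |φ(x¹,…,x^k)| ≤ b · ∏ᵢ ‖xⁱ‖ for every choice of vectors x¹,…,x^k ∈ {0,1}^n. Then |φ(x¹,…,x^k)| ≤ 2^{k/2} · b · ∏ᵢ ‖xⁱ‖ for every choice of vectors x¹,…,x^k ∈ {0,−1,1}^n. -/
private lemma sqrt_add_sqrt_le (a c : ℝ) (ha : 0 ≤ a) (hc : 0 ≤ c) :
    Real.sqrt a + Real.sqrt c ≤ Real.sqrt 2 * Real.sqrt (a + c) := by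
  have h2 : Real.sqrt 2 * Real.sqrt (a + c) = Real.sqrt (2 * (a + c)) :=
    (Real.sqrt_mul (by norm_num) _).symm
  rw [h2]
  have hs : (Real.sqrt a + Real.sqrt c) ^ 2 ≤ 2 * (a + c) := by
    have h1 := Real.sq_sqrt ha
    have h3 := Real.sq_sqrt hc
    nlinarith [sq_nonneg (Real.sqrt a - Real.sqrt c)]
  calc Real.sqrt a + Real.sqrt c
      = Real.sqrt ((Real.sqrt a + Real.sqrt c) ^ 2) :=
        (Real.sqrt_sq (by positivity)).symm
    _ ≤ Real.sqrt (2 * (a + c)) := Real.sqrt_le_sqrt hs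

theorem stmt_2 (n k : ℕ)
    (φ : MultilinearMap ℝ (fun _ : Fin k => (Fin n → ℝ)) ℝ) (b : ℝ)
    (h : ∀ x : Fin k → (Fin n → ℝ), (∀ i j, x i j = 0 ∨ x i j = 1) →
      |φ x| ≤ b * ∏ i, Real.sqrt (∑ j, (x i j) ^ 2)) :
    ∀ x : Fin k → (Fin n → ℝ), (∀ i j, x i j = 0 ∨ x i j = 1 ∨ x i j = -1) →
      |φ x| ≤ 2 ^ ((k : ℝ) / 2) * b * ∏ i, Real.sqrt (∑ j, (x i j) ^ 2) := by
  intro x hx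
  rcases Nat.eq_zero_or_pos k with hk | hk
  · subst hk
    simpa using h x (fun i => i.elim0)
  rcases Nat.eq_zero_or_pos n with hn | hn
  · subst hn
    have h0 := h x (fun i j => j.elim0)
    have hprod : (∏ i : Fin k, Real.sqrt (∑ j : Fin 0, (x i j) ^ 2)) = 0 := by
      simp [Finset.prod_const, Real.sqrt_zero, zero_pow hk.ne']
    rw [hprod] at h0 ⊢
    simpa using h0
  -- b ≥ 0
  have hb : 0 ≤ b := by
    have h1 := h (fun _ _ => 1) (fun i j => Or.inr rfl)
    have hpos : 0 < ∏ i : Fin k, Real.sqrt (∑ j : Fin n, ((1:ℝ)) ^ 2) := by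
      apply Finset.prod_pos
      intro i _
      rw [Real.sqrt_pos]
      simpa using (by exact_mod_cast hn : (0:ℝ) < n)
    nlinarith [abs_nonneg (φ (fun _ _ => 1))]
  classical
  set P : Fin k → Fin n → ℝ := fun i j => if x i j = 1 then 1 else 0 with hP
  set M : Fin k → Fin n → ℝ := fun i j => if x i j = -1 then 1 else 0 with hM
  set Q : Fin k → Fin n → ℝ := fun i => -(M i) with hQ
  have hxPQ : x = P + Q := by
    funext i j
    rcases hx i j with h0 | h1 | hm
    · norm_num [hP, hQ, hM, h0]
    · norm_num [hP, hQ, hM, h1]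
    · norm_num [hP, hQ, hM, hm]
  have hexp : φ x = ∑ s : Finset (Fin k), φ (s.piecewise P Q) := by
    conv_lhs => rw [hxPQ]
    exact φ.map_add_univ P Q
  have key : ∀ s : Finset (Fin k),
      |φ (s.piecewise P Q)| ≤ b * ∏ i, (if i ∈ s then Real.sqrt (∑ j, (P i j) ^ 2)
        else Real.sqrt (∑ j, (M i j) ^ 2)) := by
    intro s
    have hsign : φ (s.piecewise P Q)
        = (∏ i, (if i ∈ s then (1:ℝ) else -1)) • φ (s.piecewise P M) := by
      rw [← φ.map_smul_univ]
      congr 1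
      funext i
      by_cases hi : i ∈ s <;> simp [Finset.piecewise, hi, hQ]
    have habs : |φ (s.piecewise P Q)| = |φ (s.piecewise P M)| := by
      rw [hsign, smul_eq_mul, abs_mul, Finset.abs_prod]
      have : ∀ i ∈ Finset.univ (α := Fin k), |if i ∈ s then (1:ℝ) else -1| = 1 := by
        intro i _; split <;> simp
      rw [Finset.prod_congr rfl this]
      simp
    have h01 : ∀ i j, (s.piecewise P M) i j = 0 ∨ (s.piecewise P M) i j = 1 := by
      intro i j
      by_cases hi : i ∈ s <;> simp only [Finset.piecewise, hi, if_pos, if_neg,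
        if_true, if_false, hP, hM] <;> split <;> simp
    have hb2 := h (s.piecewise P M) h01
    rw [habs]
    refine hb2.trans (le_of_eq ?_)
    congr 1
    apply Finset.prod_congr rfl
    intro i _
    by_cases hi : i ∈ s <;> simp [Finset.piecewise, hi]
  have habs_sum : |φ x| ≤ b * ∏ i, (Real.sqrt (∑ j, (P i j) ^ 2)
      + Real.sqrt (∑ j, (M i j) ^ 2)) := by
    rw [hexp]
    calc |∑ s : Finset (Fin k), φ (s.piecewise P Q)|
        ≤ ∑ s : Finset (Fin k), |φ (s.piecewise P Q)| := Finset.abs_sum_le_sum_abs _ _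
      _ ≤ ∑ s : Finset (Fin k), b * ∏ i, (if i ∈ s then Real.sqrt (∑ j, (P i j) ^ 2)
            else Real.sqrt (∑ j, (M i j) ^ 2)) := Finset.sum_le_sum (fun s _ => key s)
      _ = b * ∑ s : Finset (Fin k), ∏ i, (if i ∈ s then Real.sqrt (∑ j, (P i j) ^ 2)
            else Real.sqrt (∑ j, (M i j) ^ 2)) := by rw [Finset.mul_sum]
      _ = b * ∏ i, (Real.sqrt (∑ j, (P i j) ^ 2) + Real.sqrt (∑ j, (M i j) ^ 2)) := by
          congr 1
          rw [Finset.prod_add, ← Finset.powerset_univ]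
          apply Finset.sum_congr rfl
          intro t _
          rw [show (∏ i ∈ t, Real.sqrt (∑ j, (P i j) ^ 2)) = ∏ i ∈ Finset.univ ∩ t,
            Real.sqrt (∑ j, (P i j) ^ 2) by rw [Finset.univ_inter],
            ← Finset.prod_piecewise]
          apply Finset.prod_congr rfl
          intro i _
          by_cases hi : i ∈ t <;> simp [Finset.piecewise, hi]
  -- pointwise bound
  have hpoint : ∀ i, Real.sqrt (∑ j, (P i j) ^ 2) + Real.sqrt (∑ j, (M i j) ^ 2)
      ≤ Real.sqrt 2 * Real.sqrt (∑ j, (x i j) ^ 2) := by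
    intro i
    have hsum : (∑ j, (P i j) ^ 2) + (∑ j, (M i j) ^ 2) = ∑ j, (x i j) ^ 2 := by
      rw [← Finset.sum_add_distrib]
      apply Finset.sum_congr rfl
      intro j _
      rcases hx i j with h0 | h1 | hm
      · norm_num [hP, hM, h0]
      · norm_num [hP, hM, h1]
      · norm_num [hP, hM, hm]
    calc Real.sqrt (∑ j, (P i j) ^ 2) + Real.sqrt (∑ j, (M i j) ^ 2)
        ≤ Real.sqrt 2 * Real.sqrt ((∑ j, (P i j) ^ 2) + (∑ j, (M i j) ^ 2)) :=
          sqrt_add_sqrt_le _ _ (Finset.sum_nonneg fun _ _ => sq_nonneg _)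
            (Finset.sum_nonneg fun _ _ => sq_nonneg _)
      _ = Real.sqrt 2 * Real.sqrt (∑ j, (x i j) ^ 2) := by rw [hsum]
  have hprodle : (∏ i, (Real.sqrt (∑ j, (P i j) ^ 2) + Real.sqrt (∑ j, (M i j) ^ 2)))
      ≤ ∏ i, Real.sqrt 2 * Real.sqrt (∑ j, (x i j) ^ 2) := by
    apply Finset.prod_le_prod
    · intro i _
      positivity
    · intro i _
      exact hpoint i
  have hrpow : (2:ℝ) ^ ((k : ℝ) / 2) = Real.sqrt 2 ^ k := by
    rw [← Real.rpow_natCast (Real.sqrt 2) k, Real.sqrt_eq_rpow,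
      ← Real.rpow_mul (by norm_num : (0:ℝ) ≤ 2)]
    congr 1
    ring
  have hfinal : (∏ i : Fin k, Real.sqrt 2 * Real.sqrt (∑ j, (x i j) ^ 2))
      = 2 ^ ((k : ℝ) / 2) * ∏ i, Real.sqrt (∑ j, (x i j) ^ 2) := by
    rw [Finset.prod_mul_distrib, Finset.prod_const, hrpow]
    simp
  calc |φ x| ≤ b * ∏ i, (Real.sqrt (∑ j, (P i j) ^ 2)
        + Real.sqrt (∑ j, (M i j) ^ 2)) := habs_sum
    _ ≤ b * ∏ i, Real.sqrt 2 * Real.sqrt (∑ j, (x i j) ^ 2) :=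
        mul_le_mul_of_nonneg_left hprodle hb
    _ = 2 ^ ((k : ℝ) / 2) * b * ∏ i, Real.sqrt (∑ j, (x i j) ^ 2) := by
        rw [hfinal]; ring
end

section
/- Let B be a k-linear form on ℝ^n such that |B(x,…,x)| ≤ b‖x‖^k for every vector x all of whose coordinates lie in {0} ∪ {±2^{−ℓ} : ℓ ∈ ℕ}, and such that B(e_{i₁},…,e_{i_k}) = 0 whenever the indices i₁,…,i_k are not all distinct. Then the spectral norm of B (the supremum of |B(x¹,…,x^k)|/∏‖xⁱ‖ over nonzero vectors, or equivalently for symmetric B the supremum of |B(x,…,x)|/‖x‖^k) satisfies sup_{x ≠ 0} |B(x,…,x)|/‖x‖^k ≤ 2^k · b. -/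
lemma round_aux (t : ℝ) (ht : |t| ≤ 1) :
    ∃ p y : ℝ, 0 ≤ p ∧ p ≤ 1 ∧ p * y = t ∧ (p ≠ 0 → |y| ≤ 2 * |t|) ∧
      ∃ ℓ : ℕ, y = (2 : ℝ) ^ (-(ℓ : ℤ)) ∨ y = -(2 : ℝ) ^ (-(ℓ : ℤ)) := by
  rcases eq_or_ne t 0 with rfl | ht0
  · exact ⟨0, 1, le_refl _, zero_le_one, by ring, fun h => absurd rfl h, 0,
      Or.inl (by norm_num)⟩
  · have h0 : 0 < |t| := abs_pos.2 ht0
    have hP : ∃ m : ℕ, (1/2 : ℝ) ^ m < |t| :=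
      exists_pow_lt_of_lt_one h0 (by norm_num)
    classical
    set m := Nat.find hP with hm
    have hspec : (1/2 : ℝ) ^ m < |t| := Nat.find_spec hP
    have hm1 : m ≠ 0 := by
      intro h
      rw [h] at hspec
      simp at hspec
      linarith
    obtain ⟨ℓ, hℓ⟩ : ∃ ℓ, m = ℓ + 1 := ⟨m - 1, by omega⟩
    have hnot : ¬ ((1/2 : ℝ) ^ ℓ < |t|) := Nat.find_min hP (by omega)
    push_neg at hnot
    have hpow : (0:ℝ) < (1/2 : ℝ) ^ ℓ := by positivity
    rw [hℓ] at hspec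
    have hlow : (1/2 : ℝ) ^ ℓ < 2 * |t| := by
      rw [pow_succ] at hspec; linarith
    refine ⟨|t| / (1/2 : ℝ) ^ ℓ, (if t < 0 then -1 else 1) * (1/2 : ℝ) ^ ℓ,
      by positivity, by rw [div_le_one hpow]; exact hnot, ?_, ?_, ℓ, ?_⟩
    · rcases lt_or_ge t 0 with h | h
      · simp only [if_pos h]
        rw [abs_of_neg h]; field_simp
      · simp only [if_neg (not_lt.2 h)]
        rw [abs_of_nonneg h]; field_simp
    · intro _
      have : |(if t < 0 then (-1:ℝ) else 1) * (1/2 : ℝ) ^ ℓ| = (1/2 : ℝ) ^ ℓ := by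
        rcases lt_or_ge t 0 with h | h
        · simp [if_pos h, abs_of_pos hpow]
        · simp [if_neg (not_lt.2 h), abs_of_pos hpow]
      rw [this]; linarith
    · have hy : ((2:ℝ)) ^ (-(ℓ : ℤ)) = (1/2 : ℝ) ^ ℓ := by
        rw [zpow_neg, zpow_natCast, ← inv_pow]; norm_num
      rcases lt_or_ge t 0 with h | h
      · right; rw [hy]; simp [if_pos h]
      · left; rw [hy]; simp [if_neg (not_lt.2 h)]

lemma expand_aux {n k : ℕ} (B : MultilinearMap ℝ (fun _ : Fin k => (Fin n → ℝ)) ℝ)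
    (v : Fin n → ℝ) :
    B (fun _ => v) = ∑ idx : Fin k → Fin n,
      (∏ j, v (idx j)) * B (fun j => Pi.single (idx j) 1) := by
  have hv : (fun _ : Fin k => v) =
      fun _ : Fin k => ∑ i : Fin n, v i • (Pi.single i 1 : Fin n → ℝ) := by
    funext _
    funext j
    rw [Finset.sum_apply]
    simp [Pi.single_apply]
  rw [hv, B.map_sum]
  refine Finset.sum_congr rfl fun idx _ => ?_
  rw [B.map_smul_univ]
  rfl

lemma fact_aux {n : ℕ} (f : Fin n → Bool → ℝ) :
    ∑ ω : Fin n → Bool, ∏ i, f i (ω i) = ∏ i, ∑ β : Bool, f i β := by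
  classical
  have h := Finset.prod_univ_sum (fun _ : Fin n => (Finset.univ : Finset Bool)) f
  rw [Fintype.piFinset_univ] at h
  exact h.symm

lemma key_aux {n k : ℕ} (B : MultilinearMap ℝ (fun _ : Fin k => (Fin n → ℝ)) ℝ) (b : ℝ)
    (hb : 0 ≤ b)
    (hdyadic : ∀ x : Fin n → ℝ,
      (∀ j, x j = 0 ∨ ∃ ℓ : ℕ, x j = (2 : ℝ) ^ (-(ℓ : ℤ)) ∨ x j = -(2 : ℝ) ^ (-(ℓ : ℤ))) →
      |B (fun _ => x)| ≤ b * (Real.sqrt (∑ j, (x j) ^ 2)) ^ k)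
    (hdiag : ∀ idx : Fin k → Fin n, ¬ Function.Injective idx →
      B (fun j => Pi.single (idx j) 1) = 0)
    (x : Fin n → ℝ) (hx1 : ∀ i, |x i| ≤ 1) :
    |B (fun _ => x)| ≤ 2 ^ k * b * (Real.sqrt (∑ j, (x j) ^ 2)) ^ k := by
  classical
  choose p y hp0 hp1 hpy hyb hdy using fun i => round_aux (x i) (hx1 i)
  set w : (Fin n → Bool) → ℝ := fun ω => ∏ i, (if ω i then p i else 1 - p i) with hw
  set Z : (Fin n → Bool) → Fin n → ℝ := fun ω i => if ω i then y i else 0 with hZ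
  have hw0 : ∀ ω, 0 ≤ w ω := by
    intro ω
    refine Finset.prod_nonneg fun i _ => ?_
    by_cases h : ω i
    · simp [h, hp0 i]
    · rw [if_neg h]
      linarith [hp1 i]
  have hwsum : ∑ ω : Fin n → Bool, w ω = 1 := by
    refine Eq.trans (fact_aux fun i β => if β then p i else 1 - p i) ?_
    refine Finset.prod_eq_one fun i _ => ?_
    rw [Fintype.sum_bool]
    norm_num
  have hexp : ∑ ω : Fin n → Bool, w ω * B (fun _ => Z ω) = B (fun _ => x) := by
    rw [expand_aux B x]
    have h1 : ∀ ω, w ω * B (fun _ => Z ω) = ∑ idx : Fin k → Fin n,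
        w ω * ((∏ j, Z ω (idx j)) * B (fun j => Pi.single (idx j) 1)) := by
      intro ω; rw [expand_aux B (Z ω), Finset.mul_sum]
    rw [Finset.sum_congr rfl fun ω _ => h1 ω, Finset.sum_comm]
    refine Finset.sum_congr rfl fun idx _ => ?_
    by_cases hinj : Function.Injective idx
    · have hkey : ∑ ω : Fin n → Bool, w ω * ∏ j, Z ω (idx j) = ∏ j, x (idx j) := by
        have hcomb : ∀ ω : Fin n → Bool, w ω * ∏ j, Z ω (idx j) =
            ∏ i, ((if ω i then p i else 1 - p i) *
              (if i ∈ Finset.image idx Finset.univ then (if ω i then y i else 0) else 1)) := by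
          intro ω
          rw [Finset.prod_mul_distrib]
          congr 1
          rw [Finset.prod_ite_mem, Finset.univ_inter,
            Finset.prod_image (fun a _ c _ h => hinj h)]
        rw [Finset.sum_congr rfl fun ω _ => hcomb ω]
        refine Eq.trans (fact_aux fun i β => (if β then p i else 1 - p i) *
          (if i ∈ Finset.image idx Finset.univ then (if β then y i else 0) else 1)) ?_
        have h3 : ∀ i : Fin n, (∑ β : Bool, (if β then p i else 1 - p i) *
            (if i ∈ Finset.image idx Finset.univ then (if β then y i else 0) else 1)) =
            if i ∈ Finset.image idx Finset.univ then x i else 1 := by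
          intro i
          rw [Fintype.sum_bool]
          by_cases h : i ∈ Finset.image idx Finset.univ
          · simp only [h, if_true]
            simp only [show (true = true) = True from by simp, show (false = true) = False from by simp,
              if_true, if_false]
            simp only [mul_zero, add_zero]
            exact hpy i
          · simp only [h, if_false, mul_one]
            simp only [show (true = true) = True from by simp, show (false = true) = False from by simp,
              if_true, if_false]
            ring
        rw [Finset.prod_congr rfl fun i _ => h3 i, Finset.prod_ite_mem, Finset.univ_inter,
          Finset.prod_image (fun a _ c _ h => hinj h)]
      calc ∑ ω : Fin n → Bool, w ω * ((∏ j, Z ω (idx j)) * B (fun j => Pi.single (idx j) 1))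
          = (∑ ω : Fin n → Bool, w ω * ∏ j, Z ω (idx j)) * B (fun j => Pi.single (idx j) 1) := by
            rw [Finset.sum_mul]
            exact Finset.sum_congr rfl fun ω _ => (mul_assoc _ _ _).symm
        _ = _ := by rw [hkey]
    · simp [hdiag idx hinj]
  have hZdy : ∀ ω, ∀ j, Z ω j = 0 ∨
      ∃ ℓ : ℕ, Z ω j = (2:ℝ) ^ (-(ℓ:ℤ)) ∨ Z ω j = -(2:ℝ) ^ (-(ℓ:ℤ)) := by
    intro ω j
    by_cases h : ω j
    · right; simpa [hZ, h] using hdy j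
    · left; simp [hZ, h]
  set S := Real.sqrt (∑ j, (x j) ^ 2) with hS
  have hS0 : 0 ≤ S := Real.sqrt_nonneg _
  have hbound : ∀ ω, w ω * |B (fun _ => Z ω)| ≤ w ω * (b * (2 * S) ^ k) := by
    intro ω
    rcases eq_or_ne (w ω) 0 with h | h
    · simp [h]
    · refine mul_le_mul_of_nonneg_left ?_ (hw0 ω)
      refine le_trans (hdyadic (Z ω) (hZdy ω)) ?_
      refine mul_le_mul_of_nonneg_left (pow_le_pow_left₀ (Real.sqrt_nonneg _) ?_ k) hb
      have hZx : ∀ j, (Z ω j) ^ 2 ≤ 4 * (x j) ^ 2 := by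
        intro j
        by_cases hj : ω j
        · have hpj : p j ≠ 0 := by
            intro h0
            exact h (Finset.prod_eq_zero (Finset.mem_univ j) (by simp [hj, h0]))
          have hya := hyb j hpj
          simp only [hZ, if_pos hj]
          nlinarith [sq_abs (y j), sq_abs (x j), abs_nonneg (x j), abs_nonneg (y j)]
        · simp only [hZ, if_neg hj]
          nlinarith [sq_nonneg (x j)]
      have hsum : ∑ j, (Z ω j) ^ 2 ≤ 4 * ∑ j, (x j) ^ 2 := by
        rw [Finset.mul_sum]
        exact Finset.sum_le_sum fun j _ => hZx j
      calc Real.sqrt (∑ j, (Z ω j) ^ 2) ≤ Real.sqrt (4 * ∑ j, (x j) ^ 2) :=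
            Real.sqrt_le_sqrt hsum
        _ = 2 * S := by
            rw [Real.sqrt_mul (by norm_num : (0:ℝ) ≤ 4), hS,
              show (4:ℝ) = 2 ^ 2 by norm_num, Real.sqrt_sq (by norm_num : (0:ℝ) ≤ 2)]
  calc |B (fun _ => x)| = |∑ ω : Fin n → Bool, w ω * B (fun _ => Z ω)| := by rw [hexp]
    _ ≤ ∑ ω : Fin n → Bool, |w ω * B (fun _ => Z ω)| := Finset.abs_sum_le_sum_abs _ _
    _ = ∑ ω : Fin n → Bool, w ω * |B (fun _ => Z ω)| :=
        Finset.sum_congr rfl fun ω _ => by rw [abs_mul, abs_of_nonneg (hw0 ω)]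
    _ ≤ ∑ ω : Fin n → Bool, w ω * (b * (2 * S) ^ k) := Finset.sum_le_sum fun ω _ => hbound ω
    _ = b * (2 * S) ^ k := by rw [← Finset.sum_mul, hwsum, one_mul]
    _ = 2 ^ k * b * S ^ k := by rw [mul_pow]; ring

theorem stmt_3 (n k : ℕ)
    (B : MultilinearMap ℝ (fun _ : Fin k => (Fin n → ℝ)) ℝ) (b : ℝ)
    (hdyadic : ∀ x : Fin n → ℝ,
      (∀ j, x j = 0 ∨ ∃ ℓ : ℕ, x j = (2 : ℝ) ^ (-(ℓ : ℤ)) ∨ x j = -(2 : ℝ) ^ (-(ℓ : ℤ))) →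
      |B (fun _ => x)| ≤ b * (Real.sqrt (∑ j, (x j) ^ 2)) ^ k)
    (hdiag : ∀ idx : Fin k → Fin n, ¬ Function.Injective idx →
      B (fun j => Pi.single (idx j) 1) = 0) :
    ∀ x : Fin n → ℝ, x ≠ 0 →
      |B (fun _ => x)| / (Real.sqrt (∑ j, (x j) ^ 2)) ^ k ≤ 2 ^ k * b := by
  classical
  intro x hx
  rcases Nat.eq_zero_or_pos n with hn | hn
  · exact absurd (funext fun i => absurd i.2 (by omega)) hx
  have hb : 0 ≤ b := by
    set i0 : Fin n := ⟨0, hn⟩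
    have hdy0 : ∀ j, (Pi.single i0 (1:ℝ) : Fin n → ℝ) j = 0 ∨
        ∃ ℓ : ℕ, (Pi.single i0 (1:ℝ) : Fin n → ℝ) j = (2:ℝ) ^ (-(ℓ:ℤ)) ∨
          (Pi.single i0 (1:ℝ) : Fin n → ℝ) j = -(2:ℝ) ^ (-(ℓ:ℤ)) := by
      intro j
      by_cases h : j = i0
      · right; exact ⟨0, Or.inl (by simp [Pi.single_apply, h])⟩
      · left; simp [Pi.single_apply, h]
    have hsum : ∑ j, ((Pi.single i0 (1:ℝ) : Fin n → ℝ) j) ^ 2 = 1 := by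
      have h1 : ∀ j, ((Pi.single i0 (1:ℝ) : Fin n → ℝ) j) ^ 2 =
          if j = i0 then 1 else 0 := by
        intro j; by_cases h : j = i0 <;> simp [Pi.single_apply, h]
      rw [Finset.sum_congr rfl fun j _ => h1 j, Finset.sum_ite_eq']
      simp
    have h0 := hdyadic _ hdy0
    rw [hsum] at h0
    simp only [Real.sqrt_one, one_pow, mul_one] at h0
    exact le_trans (abs_nonneg _) h0
  obtain ⟨m, hm⟩ : ∃ m : ℕ, ∀ i, |x i| ≤ 2 ^ m := by
    obtain ⟨m, hm⟩ := pow_unbounded_of_one_lt (∑ i, |x i|) (by norm_num : (1:ℝ) < 2)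
    exact ⟨m, fun i => le_trans (Finset.single_le_sum
      (fun j _ => abs_nonneg (x j)) (Finset.mem_univ i)) hm.le⟩
  set c : ℝ := ((2:ℝ) ^ m)⁻¹ with hc
  have hc0 : 0 < c := by positivity
  have hx1 : ∀ i, |c * x i| ≤ 1 := by
    intro i
    rw [abs_mul, abs_of_pos hc0]
    calc c * |x i| ≤ c * 2 ^ m := by
          exact mul_le_mul_of_nonneg_left (hm i) hc0.le
      _ = 1 := inv_mul_cancel₀ (by positivity)
  have hkey := key_aux B b hb hdyadic hdiag (fun i => c * x i) hx1
  have hBc : B (fun _ => fun i => c * x i) = c ^ k * B (fun _ => x) := by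
    have h1 : (fun _ : Fin k => fun i => c * x i) =
        fun j : Fin k => (fun _ : Fin k => c) j • (fun _ : Fin k => x) j := rfl
    rw [h1, B.map_smul_univ]
    simp
  have hSc : Real.sqrt (∑ j, (c * x j) ^ 2) = c * Real.sqrt (∑ j, (x j) ^ 2) := by
    have h1 : ∑ j, (c * x j) ^ 2 = c ^ 2 * ∑ j, (x j) ^ 2 := by
      rw [Finset.mul_sum]
      exact Finset.sum_congr rfl fun j _ => by ring
    rw [h1, Real.sqrt_mul (by positivity), Real.sqrt_sq hc0.le]
  rw [hBc, hSc, abs_mul, abs_of_pos (pow_pos hc0 k), mul_pow] at hkey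
  have hSpos : 0 < Real.sqrt (∑ j, (x j) ^ 2) := by
    rw [Real.sqrt_pos]
    have hex : ∃ i, x i ≠ 0 := by
      by_contra h
      push_neg at h
      exact hx (funext h)
    obtain ⟨i, hi⟩ := hex
    exact Finset.sum_pos' (fun j _ => sq_nonneg _) ⟨i, Finset.mem_univ i, by positivity⟩
  rw [div_le_iff₀ (pow_pos hSpos k)]
  have hck : 0 < c ^ k := pow_pos hc0 k
  rw [show (2:ℝ) ^ k * b * (c ^ k * Real.sqrt (∑ j, (x j) ^ 2) ^ k) =
      c ^ k * (2 ^ k * b * Real.sqrt (∑ j, (x j) ^ 2) ^ k) from by ring] at hkey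
  exact (mul_le_mul_iff_of_pos_left hck).mp hkey
end

section
/- Let H be a k-uniform hypergraph on [n] with adjacency form A and let A_K be the adjacency form of the complete k-uniform hypergraph. Suppose |A(x¹,…,x^k) − α·A_K(x¹,…,x^k)| ≤ ρ ∏ᵢ‖xⁱ‖ for every choice of pairwise orthogonal vectors x¹,…,x^k ∈ {0,1}^n. Then |A(x¹,…,x^k) − α·A_K(x¹,…,x^k)| ≤ ρ·k^{k/2} ∏ᵢ‖xⁱ‖ for every choice of (not necessarily orthogonal) vectors x¹,…,x^k ∈ {0,1}^n. -/
open Finset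

lemma count_aux {n k : ℕ} (idx : Fin k → Fin n) (hinj : Function.Injective idx) :
    ∑ f : Fin n → Fin k, ∏ i, (if f (idx i) = i then (1:ℝ) else 0) = (k:ℝ) ^ (n - k) := by
  classical
  have h1 : ∀ f : Fin n → Fin k, (∏ i, (if f (idx i) = i then (1:ℝ) else 0))
      = ∏ j, (if ∀ i, idx i = j → f j = i then (1:ℝ) else 0) := by
    intro f
    simp only [Finset.prod_boole]
    by_cases h : ∀ i ∈ (univ : Finset (Fin k)), f (idx i) = i
    · rw [if_pos h, if_pos]; intro j _ i hij; subst hij; exact h i (mem_univ i)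
    · rw [if_neg h, if_neg]; intro hc; exact h fun i _ => hc (idx i) (mem_univ _) i rfl
  simp_rw [h1]
  rw [← Fintype.piFinset_univ, Finset.sum_prod_piFinset (univ : Finset (Fin k)) (fun j a => if ∀ i : Fin k, idx i = j → a = i then (1:ℝ) else 0)]
  have h2 : ∀ j : Fin n, (∑ a ∈ (univ : Finset (Fin k)), if (∀ i, idx i = j → a = i) then (1:ℝ) else 0)
      = if j ∈ Finset.image idx univ then 1 else (k:ℝ) := by
    intro j
    by_cases hj : j ∈ Finset.image idx univ
    · obtain ⟨i₀, -, rfl⟩ := Finset.mem_image.mp hj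
      rw [if_pos hj]
      have hiff : ∀ a : Fin k, (∀ i, idx i = idx i₀ → a = i) ↔ a = i₀ :=
        fun a => ⟨fun h => h i₀ rfl, fun h i hi => h.trans (hinj hi).symm⟩
      simp only [hiff]
      simp
    · rw [if_neg hj]
      have hvac : ∀ a : Fin k, (∀ i, idx i = j → a = i) := by
        intro a i hi
        exact ((hj (Finset.mem_image.mpr ⟨i, mem_univ _, hi⟩))).elim
      simp only [Finset.sum_boole]
      rw [Finset.filter_true_of_mem fun a _ => hvac a, Finset.card_univ, Fintype.card_fin]
  simp_rw [h2]
  rw [Finset.prod_ite, Finset.prod_const_one, one_mul, Finset.prod_const]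
  have hSc : univ.filter (fun j => j ∉ Finset.image idx univ) = (Finset.image idx univ)ᶜ := by
    ext j; simp
  rw [hSc, Finset.card_compl, Finset.card_image_of_injective _ hinj, Finset.card_univ,
    Fintype.card_fin, Fintype.card_fin]

lemma count_zero {n k : ℕ} (idx : Fin k → Fin n) (hni : ¬ Function.Injective idx) :
    ∑ f : Fin n → Fin k, ∏ i, (if f (idx i) = i then (1:ℝ) else 0) = 0 := by
  obtain ⟨a, b, hab, hne⟩ := Function.not_injective_iff.mp hni
  refine Finset.sum_eq_zero fun f _ => ?_
  by_cases h : f (idx a) = a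
  · refine Finset.prod_eq_zero (Finset.mem_univ b) ?_
    rw [if_neg]
    rw [← hab, h]
    exact hne
  · exact Finset.prod_eq_zero (Finset.mem_univ a) (if_neg h)

theorem stmt_8 (n k : ℕ) (hk : 1 ≤ k) (hkn : k ≤ n) (α ρ : ℝ)
    (H : Finset (Finset (Fin n))) (hcard : ∀ e ∈ H, e.card = k)
    (A AK : MultilinearMap ℝ (fun _ : Fin k => (Fin n → ℝ)) ℝ)
    (hA : ∀ idx : Fin k → Fin n,
      A (fun j => Pi.single (idx j) 1) = if Finset.image idx Finset.univ ∈ H then 1 else 0)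
    (hAK : ∀ idx : Fin k → Fin n,
      AK (fun j => Pi.single (idx j) 1) = if Function.Injective idx then 1 else 0)
    (hdisj : ∀ x : Fin k → (Fin n → ℝ), (∀ i j, x i j = 0 ∨ x i j = 1) →
      (∀ i i', i ≠ i' → ∑ j, x i j * x i' j = 0) →
      |A x - α * AK x| ≤ ρ * ∏ i, Real.sqrt (∑ j, (x i j) ^ 2)) :
    ∀ x : Fin k → (Fin n → ℝ), (∀ i j, x i j = 0 ∨ x i j = 1) →
      |A x - α * AK x| ≤ ρ * (k : ℝ) ^ ((k : ℝ) / 2) * ∏ i, Real.sqrt (∑ j, (x i j) ^ 2) := by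
  classical
  intro x h01
  set D : MultilinearMap ℝ (fun _ : Fin k => (Fin n → ℝ)) ℝ := A - α • AK with hD
  have hDapp : ∀ z, D z = A z - α * AK z := by
    intro z; simp [hD, MultilinearMap.sub_apply, MultilinearMap.smul_apply, smul_eq_mul]
  -- expansion of D over the standard basis
  have hexp : ∀ z : Fin k → (Fin n → ℝ),
      D z = ∑ idx : Fin k → Fin n,
        (∏ i, z i (idx i)) * D (fun i => Pi.single (idx i) 1) := by
    intro z
    have hz : z = fun i => ∑ j, z i j • (Pi.single j 1 : Fin n → ℝ) := by
      funext i j'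
      rw [Finset.sum_apply]
      simp only [Pi.smul_apply, Pi.single_apply, smul_eq_mul, mul_ite, mul_one, mul_zero]
      rw [Finset.sum_ite_eq univ j' (fun j => z i j), if_pos (mem_univ j')]
    calc D z = D (fun i => ∑ j, z i j • (Pi.single j 1 : Fin n → ℝ)) := by rw [← hz]
    _ = ∑ idx : Fin k → Fin n, D (fun i => z i (idx i) • (Pi.single (idx i) 1 : Fin n → ℝ)) :=
        D.map_sum (fun i j => z i j • (Pi.single j 1 : Fin n → ℝ))
    _ = _ := by
        refine Finset.sum_congr rfl fun idx _ => ?_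
        rw [D.map_smul_univ]
        simp [smul_eq_mul]
  -- coefficients vanish on non-injective tuples
  have hczero : ∀ idx : Fin k → Fin n, ¬ Function.Injective idx →
      D (fun i => Pi.single (idx i) 1) = 0 := by
    intro idx hni
    have hAK0 : AK (fun i => (Pi.single (idx i) 1 : Fin n → ℝ)) = 0 := by
      rw [hAK]; rw [if_neg hni]
    have hA0 : A (fun i => (Pi.single (idx i) 1 : Fin n → ℝ)) = 0 := by
      rw [hA, if_neg]
      intro hH
      have hck := hcard _ hH
      have : Set.InjOn idx (univ : Finset (Fin k)) := by
        apply Finset.card_image_iff.mp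
        rw [hck, Finset.card_univ, Fintype.card_fin]
      rw [Finset.coe_univ] at this
      exact hni (Set.injOn_univ.mp this)
    rw [hDapp, hA0, hAK0, mul_zero, sub_zero]
  -- the family of orthogonalized vectors
  set y : (Fin n → Fin k) → Fin k → Fin n → ℝ :=
    fun f i j => x i j * (if f j = i then 1 else 0) with hy
  -- key averaging identity
  have key : ∑ f : Fin n → Fin k, D (y f) = (k:ℝ)^(n-k) * D x := by
    have lhs_eq : ∑ f : Fin n → Fin k, D (y f)
        = ∑ f : Fin n → Fin k, ∑ idx : Fin k → Fin n,
            (∏ i, y f i (idx i)) * D (fun i => Pi.single (idx i) 1) :=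
      Finset.sum_congr rfl fun f _ => hexp (y f)
    rw [lhs_eq, Finset.sum_comm, hexp x, Finset.mul_sum]
    refine Finset.sum_congr rfl fun idx _ => ?_
    by_cases hinj : Function.Injective idx
    · have hsplit : ∀ f : Fin n → Fin k, (∏ i, y f i (idx i))
          = (∏ i, x i (idx i)) * ∏ i, (if f (idx i) = i then (1:ℝ) else 0) := by
        intro f; rw [← Finset.prod_mul_distrib]
      simp_rw [hsplit]
      rw [← Finset.sum_mul, ← Finset.mul_sum, count_aux idx hinj]
      ring
    · rw [hczero idx hinj]
      simp
  -- pointwise bound from the orthogonal hypothesis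
  have hyb : ∀ f : Fin n → Fin k,
      |D (y f)| ≤ ρ * ∏ i, Real.sqrt (∑ j, (y f i j)^2) := by
    intro f
    have h01' : ∀ i j, y f i j = 0 ∨ y f i j = 1 := by
      intro i j
      by_cases h : f j = i
      · simpa [hy, h] using h01 i j
      · simp [hy, h]
    have horth : ∀ i i', i ≠ i' → ∑ j, y f i j * y f i' j = 0 := by
      intro i i' hne
      refine Finset.sum_eq_zero fun j _ => ?_
      by_cases h : f j = i
      · have : ¬ (f j = i') := fun h' => hne (h.symm.trans h')
        simp [hy, this]
      · simp [hy, h]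
    have := hdisj (y f) h01' horth
    rwa [← hDapp] at this
  -- ρ is nonnegative
  have hρ : 0 ≤ ρ := by
    set idx0 : Fin k → Fin n := fun i => Fin.castLE hkn i with hidx0
    have h01e : ∀ i j, (Pi.single (idx0 i) 1 : Fin n → ℝ) j = 0 ∨
        (Pi.single (idx0 i) 1 : Fin n → ℝ) j = 1 := by
      intro i j
      rw [Pi.single_apply]
      by_cases h : j = idx0 i
      · right; rw [if_pos h]
      · left; rw [if_neg h]
    have horthe : ∀ i i', i ≠ i' →
        ∑ j, (Pi.single (idx0 i) 1 : Fin n → ℝ) j * (Pi.single (idx0 i') 1 : Fin n → ℝ) j = 0 := by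
      intro i i' hne
      refine Finset.sum_eq_zero fun j _ => ?_
      have hne' : idx0 i ≠ idx0 i' := fun h => hne (Fin.castLE_injective hkn h)
      rw [Pi.single_apply, Pi.single_apply]
      by_cases h : j = idx0 i
      · have hh : ¬ (j = idx0 i') := fun h' => hne' ((h.symm.trans h'))
        rw [if_neg hh, mul_zero]
      · rw [if_neg h, zero_mul]
    have hb := hdisj (fun i => Pi.single (idx0 i) 1) h01e horthe
    have hnorm : ∀ i : Fin k, ∑ j, ((Pi.single (idx0 i) 1 : Fin n → ℝ) j)^2 = 1 := by
      intro i
      have hsq : ∀ j, ((Pi.single (idx0 i) 1 : Fin n → ℝ) j)^2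
          = if j = idx0 i then (1:ℝ) else 0 := by
        intro j
        rw [Pi.single_apply]
        by_cases h : j = idx0 i
        · rw [if_pos h]; norm_num
        · rw [if_neg h]; norm_num
      simp_rw [hsq]
      rw [Finset.sum_ite_eq' univ (idx0 i) (fun _ => (1:ℝ)), if_pos (mem_univ _)]
    simp_rw [hnorm] at hb
    simp only [Real.sqrt_one, Finset.prod_const_one, mul_one] at hb
    exact le_trans (abs_nonneg _) hb
  -- second moment bound
  have sqsum : ∀ f : Fin n → Fin k, ∀ i, ∑ j, (y f i j)^2
      = ∑ j, (x i j)^2 * (if f j = i then (1:ℝ) else 0) := by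
    intro f i
    refine Finset.sum_congr rfl fun j _ => ?_
    by_cases h : f j = i <;> simp [hy, h]
  have sq_bound : ∑ f : Fin n → Fin k, ∏ i, (∑ j, (y f i j)^2)
      ≤ (k:ℝ)^(n-k) * ∏ i, (∑ j, (x i j)^2) := by
    have expand : ∀ f : Fin n → Fin k, ∏ i, (∑ j, (y f i j)^2)
        = ∑ idx : Fin k → Fin n,
            (∏ i, (x i (idx i))^2) * ∏ i, (if f (idx i) = i then (1:ℝ) else 0) := by
      intro f
      simp_rw [sqsum f]
      rw [Fintype.prod_sum (fun i j => (x i j)^2 * (if f j = i then (1:ℝ) else 0))]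
      exact Finset.sum_congr rfl fun idx _ => (Finset.prod_mul_distrib)
    simp_rw [expand]
    rw [Finset.sum_comm]
    have hrhs : ∏ i, (∑ j, (x i j)^2) = ∑ idx : Fin k → Fin n, ∏ i, (x i (idx i))^2 :=
      Fintype.prod_sum (fun i j => (x i j)^2)
    rw [hrhs, Finset.mul_sum]
    refine Finset.sum_le_sum fun idx _ => ?_
    rw [← Finset.mul_sum]
    by_cases hinj : Function.Injective idx
    · rw [count_aux idx hinj, mul_comm]
    · rw [count_zero idx hinj, mul_zero]
      positivity
  -- Cauchy–Schwarz
  set B : ℝ := ∑ f : Fin n → Fin k, ∏ i, Real.sqrt (∑ j, (y f i j)^2) with hB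
  have hBnn : 0 ≤ B := by
    refine Finset.sum_nonneg fun f _ => Finset.prod_nonneg fun i _ => Real.sqrt_nonneg _
  have hBsq : B^2 ≤ (k:ℝ)^n * ((k:ℝ)^(n-k) * ∏ i, (∑ j, (x i j)^2)) := by
    have hcs := sq_sum_le_card_mul_sum_sq
      (s := (univ : Finset (Fin n → Fin k)))
      (f := fun f => ∏ i, Real.sqrt (∑ j, (y f i j)^2))
    have hcard' : ((univ : Finset (Fin n → Fin k)).card : ℝ) = (k:ℝ)^n := by
      rw [Finset.card_univ, Fintype.card_fun, Fintype.card_fin, Fintype.card_fin]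
      push_cast; ring
    have hsq : ∀ f : Fin n → Fin k, (∏ i, Real.sqrt (∑ j, (y f i j)^2))^2
        = ∏ i, (∑ j, (y f i j)^2) := by
      intro f
      rw [← Finset.prod_pow]
      refine Finset.prod_congr rfl fun i _ => ?_
      exact Real.sq_sqrt (Finset.sum_nonneg fun j _ => sq_nonneg _)
    calc B^2 ≤ ((univ : Finset (Fin n → Fin k)).card : ℝ)
          * ∑ f : Fin n → Fin k, (∏ i, Real.sqrt (∑ j, (y f i j)^2))^2 := by exact_mod_cast hcs
      _ = (k:ℝ)^n * ∑ f : Fin n → Fin k, ∏ i, (∑ j, (y f i j)^2) := by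
          rw [hcard']; congr 1; exact Finset.sum_congr rfl fun f _ => hsq f
      _ ≤ (k:ℝ)^n * ((k:ℝ)^(n-k) * ∏ i, (∑ j, (x i j)^2)) := by
          refine mul_le_mul_of_nonneg_left sq_bound (by positivity)
  -- put it together
  have hkpos : (0:ℝ) < (k:ℝ)^(n-k) := by positivity
  have hmain : (k:ℝ)^(n-k) * |A x - α * AK x| ≤ ρ * B := by
    rw [← hDapp]
    calc (k:ℝ)^(n-k) * |D x| = |(k:ℝ)^(n-k) * D x| := by
          rw [abs_mul, abs_of_pos hkpos]
      _ = |∑ f : Fin n → Fin k, D (y f)| := by rw [key]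
      _ ≤ ∑ f : Fin n → Fin k, |D (y f)| := Finset.abs_sum_le_sum_abs _ _
      _ ≤ ∑ f : Fin n → Fin k, ρ * ∏ i, Real.sqrt (∑ j, (y f i j)^2) :=
          Finset.sum_le_sum fun f _ => hyb f
      _ = ρ * B := by rw [hB, Finset.mul_sum]
  -- bound B
  have hBle : B ≤ (k:ℝ)^(n-k) * ((k:ℝ) ^ ((k:ℝ)/2) * ∏ i, Real.sqrt (∑ j, (x i j)^2)) := by
    have hrhs_nn : (0:ℝ) ≤ (k:ℝ)^(n-k) * ((k:ℝ) ^ ((k:ℝ)/2) * ∏ i, Real.sqrt (∑ j, (x i j)^2)) := by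
      have : (0:ℝ) ≤ ∏ i, Real.sqrt (∑ j, (x i j)^2) :=
        Finset.prod_nonneg fun i _ => Real.sqrt_nonneg _
      positivity
    have hsqr : ((k:ℝ)^(n-k) * ((k:ℝ) ^ ((k:ℝ)/2) * ∏ i, Real.sqrt (∑ j, (x i j)^2)))^2
        = (k:ℝ)^n * ((k:ℝ)^(n-k) * ∏ i, (∑ j, (x i j)^2)) := by
      have h1 : ((k:ℝ) ^ ((k:ℝ)/2))^2 = (k:ℝ)^k := by
        rw [← Real.rpow_natCast ((k:ℝ) ^ ((k:ℝ)/2)) 2, ← Real.rpow_mul (by positivity)]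
        rw [show (k:ℝ)/2 * (2:ℕ) = (k:ℕ) by push_cast; ring, Real.rpow_natCast]
      have h2 : (∏ i, Real.sqrt (∑ j, (x i j)^2))^2 = ∏ i, (∑ j, (x i j)^2) := by
        rw [← Finset.prod_pow]
        exact Finset.prod_congr rfl fun i _ =>
          Real.sq_sqrt (Finset.sum_nonneg fun j _ => sq_nonneg _)
      have h3 : (k:ℝ)^(n-k) * (k:ℝ)^(n-k) * (k:ℝ)^k = (k:ℝ)^n * (k:ℝ)^(n-k) := by
        rw [← pow_add, ← pow_add, ← pow_add]
        congr 1
        omega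
      calc ((k:ℝ)^(n-k) * ((k:ℝ) ^ ((k:ℝ)/2) * ∏ i, Real.sqrt (∑ j, (x i j)^2)))^2
          = (k:ℝ)^(n-k) * (k:ℝ)^(n-k) * (k:ℝ)^k * (∏ i, (∑ j, (x i j)^2)) := by
            rw [mul_pow, mul_pow, h1, h2]; ring
        _ = (k:ℝ)^n * ((k:ℝ)^(n-k) * ∏ i, (∑ j, (x i j)^2)) := by rw [h3]; ring
    nlinarith [hBsq, hBnn, hrhs_nn]
  have := le_trans hmain (mul_le_mul_of_nonneg_left hBle hρ)
  rw [show ρ * ((k:ℝ)^(n-k) * ((k:ℝ) ^ ((k:ℝ)/2) * ∏ i, Real.sqrt (∑ j, (x i j)^2)))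
      = (k:ℝ)^(n-k) * (ρ * (k:ℝ) ^ ((k:ℝ)/2) * ∏ i, Real.sqrt (∑ j, (x i j)^2)) by ring] at this
  exact le_of_mul_le_mul_left this hkpos
end

section
/- For any k-uniform hypergraph H on n vertices (n ≥ k ≥ 2) and any constant α ∈ [0,1], the discrepancy parameter ρ_α(H) satisfies ρ_α(H) ≥ (α(1−α)/√(α² + (1−α)²)) · √(n−k+1). -/
/-- Number of ordered tuples `(v₁,…,v_k) ∈ V₁ × ⋯ × V_k` forming an edge of `H`. -/
def eCount (n k : ℕ) (H : Finset (Finset (Fin n))) (V : Fin k → Finset (Fin n)) : ℕ :=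
  (Finset.univ.filter (fun v : Fin k → Fin n =>
    (∀ i, v i ∈ V i) ∧ Finset.image v Finset.univ ∈ H)).card

/-- The parts used in the proof: the first `k-1` parts are singletons, the last part is `W`. -/
def parts (n k : ℕ) (hkn : k ≤ n) (W : Finset (Fin n)) : Fin k → Finset (Fin n) :=
  fun i => if (i : ℕ) = k - 1 then W else {Fin.castLE hkn i}

lemma image_eq (n k : ℕ) (hk : 2 ≤ k) (hkn : k ≤ n) (v : Fin k → Fin n)
    (hv : ∀ i : Fin k, (i : ℕ) ≠ k - 1 → v i = Fin.castLE hkn i) :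
    Finset.image v Finset.univ
      = insert (v ⟨k - 1, by omega⟩)
          (Finset.univ.filter (fun u : Fin n => (u : ℕ) < k - 1)) := by
  ext u
  simp only [Finset.mem_image, Finset.mem_insert, Finset.mem_filter, Finset.mem_univ, true_and]
  constructor
  · rintro ⟨i, -, rfl⟩
    by_cases h : (i : ℕ) = k - 1
    · left
      exact congrArg v (Fin.ext h)
    · right
      rw [hv i h]
      have := i.isLt
      simp only [Fin.coe_castLE]
      omega
  · rintro (rfl | h)
    · exact ⟨_, rfl⟩
    · refine ⟨⟨(u : ℕ), by omega⟩, ?_⟩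
      rw [hv ⟨(u : ℕ), by omega⟩ (show ((u : ℕ)) ≠ k - 1 by omega)]
      exact Fin.ext rfl

lemma eCount_parts (n k : ℕ) (hk : 2 ≤ k) (hkn : k ≤ n) (H : Finset (Finset (Fin n)))
    (W : Finset (Fin n)) (hW : ∀ v ∈ W, k - 1 ≤ (v : ℕ)) :
    eCount n k H (parts n k hkn W)
      = (W.filter (fun w =>
          insert w (Finset.univ.filter (fun u : Fin n => (u : ℕ) < k - 1)) ∈ H)).card := by
  classical
  unfold eCount
  apply Finset.card_bij (fun v _ => v ⟨k - 1, by omega⟩)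
  · intro v hv
    simp only [Finset.mem_filter, Finset.mem_univ, true_and] at hv
    obtain ⟨h1, h2⟩ := hv
    have hv' : ∀ i : Fin k, (i : ℕ) ≠ k - 1 → v i = Fin.castLE hkn i := by
      intro i hi
      have := h1 i
      simp only [parts, hi, if_false, Finset.mem_singleton] at this
      exact this
    have hL : v ⟨k - 1, by omega⟩ ∈ W := by
      have := h1 ⟨k - 1, by omega⟩
      simpa [parts] using this
    simp only [Finset.mem_filter]
    exact ⟨hL, by rw [← image_eq n k hk hkn v hv']; exact h2⟩
  · intro v hv v' hv' heq
    simp only [Finset.mem_filter, Finset.mem_univ, true_and] at hv hv'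
    funext i
    by_cases h : (i : ℕ) = k - 1
    · have : i = ⟨k - 1, by omega⟩ := Fin.ext h
      rw [this]; exact heq
    · have e1 := hv.1 i
      have e2 := hv'.1 i
      simp only [parts, h, if_false, Finset.mem_singleton] at e1 e2
      rw [e1, e2]
  · intro w hw
    simp only [Finset.mem_filter] at hw
    refine ⟨fun i => if (i : ℕ) = k - 1 then w else Fin.castLE hkn i, ?_, by simp⟩
    simp only [Finset.mem_filter, Finset.mem_univ, true_and]
    constructor
    · intro i
      by_cases h : (i : ℕ) = k - 1 <;> simp [parts, h, hw.1]
    · rw [image_eq n k hk hkn _ (by intro i hi; simp [hi])]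
      simpa using hw.2

lemma prod_parts (n k : ℕ) (hk : 2 ≤ k) (hkn : k ≤ n) (W : Finset (Fin n)) :
    ∏ i, ((parts n k hkn W) i).card = W.card := by
  rw [Finset.prod_eq_single (⟨k - 1, by omega⟩ : Fin k)]
  · simp [parts]
  · intro j _ hj
    have : (j : ℕ) ≠ k - 1 := fun h => hj (Fin.ext h)
    simp [parts, this]
  · simp

lemma parts_disjoint (n k : ℕ) (hkn : k ≤ n) (W : Finset (Fin n))
    (hW : ∀ v ∈ W, k - 1 ≤ (v : ℕ)) :
    ∀ i j : Fin k, i ≠ j → Disjoint (parts n k hkn W i) (parts n k hkn W j) := by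
  intro i j hij
  have hij' : (i : ℕ) ≠ (j : ℕ) := fun h => hij (Fin.ext h)
  unfold parts
  split_ifs with h1 h2 h3
  · omega
  · rw [Finset.disjoint_singleton_right]
    intro hmem
    have h4 := hW _ hmem
    have h5 : ((Fin.castLE hkn j : Fin n) : ℕ) = (j : ℕ) := rfl
    have := j.isLt
    omega
  · rw [Finset.disjoint_singleton_left]
    intro hmem
    have h4 := hW _ hmem
    have h5 : ((Fin.castLE hkn i : Fin n) : ℕ) = (i : ℕ) := rfl
    have := i.isLt
    omega
  · rw [Finset.disjoint_singleton_right, Finset.mem_singleton]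
    intro heq
    exact hij' (by simpa [Fin.ext_iff] using heq.symm)

lemma parts_nonempty (n k : ℕ) (hkn : k ≤ n) (W : Finset (Fin n)) (hW : W.Nonempty) :
    ∀ i : Fin k, ((parts n k hkn W) i).Nonempty := by
  intro i
  unfold parts
  split_ifs
  · exact hW
  · exact Finset.singleton_nonempty _

lemma key_choice (α m s t : ℝ) (hα0 : 0 ≤ α) (hα1 : α ≤ 1) (hs : 0 ≤ s) (ht : 0 ≤ t)
    (hm : s + t = m) :
    (α * (1 - α)) ^ 2 * m ≤ (α ^ 2 + (1 - α) ^ 2) * ((1 - α) ^ 2 * s)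
    ∨ (α * (1 - α)) ^ 2 * m ≤ (α ^ 2 + (1 - α) ^ 2) * (α ^ 2 * t) := by
  subst hm
  by_contra h
  push_neg at h
  obtain ⟨h1, h2⟩ := h
  rcases eq_or_lt_of_le hα0 with rfl | hα0'
  · nlinarith [h1, hs]
  · rcases eq_or_lt_of_le hα1 with rfl | hα1'
    · nlinarith [h2, ht]
    · nlinarith [mul_lt_mul_of_pos_left h1 (pow_pos hα0' 2),
        mul_lt_mul_of_pos_left h2 (pow_pos (by linarith : (0:ℝ) < 1 - α) 2)]

lemma sqrt_step (a b c m s : ℝ) (ha : 0 ≤ a) (hb : 0 ≤ b) (hm : 0 ≤ m) (hs : 0 ≤ s)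
    (hc : 0 < c) (h : a ^ 2 * m ≤ c * (b ^ 2 * s)) :
    a / Real.sqrt c * Real.sqrt m ≤ b * Real.sqrt s := by
  have h1 : a / Real.sqrt c * Real.sqrt m = Real.sqrt (a ^ 2 * m / c) := by
    rw [Real.sqrt_div (by positivity), Real.sqrt_mul (by positivity), Real.sqrt_sq ha]
    ring
  have h2 : b * Real.sqrt s = Real.sqrt (b ^ 2 * s) := by
    rw [Real.sqrt_mul (by positivity), Real.sqrt_sq hb]
  rw [h1, h2]
  apply Real.sqrt_le_sqrt
  rw [div_le_iff₀ hc]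
  linarith

set_option maxHeartbeats 1000000 in
theorem stmt_12 (n k : ℕ) (hk : 2 ≤ k) (hkn : k ≤ n) (α : ℝ) (hα0 : 0 ≤ α) (hα1 : α ≤ 1)
    (H : Finset (Finset (Fin n))) (hcard : ∀ e ∈ H, e.card = k) :
    ∃ V : Fin k → Finset (Fin n),
      (∀ i j, i ≠ j → Disjoint (V i) (V j)) ∧ (∀ i, (V i).Nonempty) ∧
      α * (1 - α) / Real.sqrt (α ^ 2 + (1 - α) ^ 2) * Real.sqrt ((n : ℝ) - k + 1)
        ≤ |(eCount n k H V : ℝ) - α * ∏ i, ((V i).card : ℝ)|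
            / Real.sqrt (∏ i, ((V i).card : ℝ)) := by
  classical
  have hA : (0 : ℝ) < α ^ 2 + (1 - α) ^ 2 := by nlinarith
  by_cases hdeg : α = 0 ∨ α = 1
  · -- degenerate case: the LHS is zero
    refine ⟨fun i => {Fin.castLE hkn i}, ?_, fun i => Finset.singleton_nonempty _, ?_⟩
    · intro i j hij
      rw [Finset.disjoint_singleton_right, Finset.mem_singleton]
      intro heq
      exact hij (Fin.ext (by simpa [Fin.ext_iff] using heq.symm))
    · have hz : α * (1 - α) = 0 := by rcases hdeg with rfl | rfl <;> ring
      rw [hz, zero_div, zero_mul]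
      positivity
  · push_neg at hdeg
    have hα0' : 0 < α := lt_of_le_of_ne hα0 (Ne.symm hdeg.1)
    have hα1' : 0 < 1 - α := by
      rcases lt_or_eq_of_le hα1 with h | h
      · linarith
      · exact absurd h hdeg.2
    -- set up the base set and the two candidate last parts
    set B : Finset (Fin n) := Finset.univ.filter (fun u : Fin n => (u : ℕ) < k - 1) with hB
    set R : Finset (Fin n) := Finset.univ.filter (fun u : Fin n => k - 1 ≤ (u : ℕ)) with hR
    set S : Finset (Fin n) := R.filter (fun w => insert w B ∈ H) with hS
    set T : Finset (Fin n) := R.filter (fun w => insert w B ∉ H) with hT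
    have hSsub : ∀ v ∈ S, k - 1 ≤ (v : ℕ) := by
      intro v hv
      rw [hS, Finset.mem_filter, hR, Finset.mem_filter] at hv
      exact hv.1.2
    have hTsub : ∀ v ∈ T, k - 1 ≤ (v : ℕ) := by
      intro v hv
      rw [hT, Finset.mem_filter, hR, Finset.mem_filter] at hv
      exact hv.1.2
    -- cardinality bookkeeping
    have hBcard : B.card = k - 1 := by
      have : B = Finset.map (Fin.castLEEmb (show k - 1 ≤ n by omega)) Finset.univ := by
        ext u
        simp only [hB, Finset.mem_filter, Finset.mem_univ, true_and, Finset.mem_map,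
          Fin.castLEEmb_apply, Fin.ext_iff, Fin.coe_castLE]
        constructor
        · intro h
          exact ⟨⟨(u : ℕ), h⟩, rfl⟩
        · rintro ⟨i, hi⟩
          have := i.isLt
          omega
      rw [this]
      simp
    have hBR : B.card + R.card = n := by
      have : R = Finset.univ.filter (fun u : Fin n => ¬ (u : ℕ) < k - 1) := by
        ext u; simp [hR, not_lt]
      rw [this, hB, Finset.card_filter_add_card_filter_not]
      simp
    have hST : S.card + T.card = R.card := by
      rw [hS, hT]
      exact Finset.card_filter_add_card_filter_not _
    have hRcard : R.card = n - k + 1 := by omega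
    have hm1 : (1 : ℕ) ≤ R.card := by omega
    have hmcast : ((R.card : ℝ)) = (n : ℝ) - k + 1 := by
      rw [hRcard]
      push_cast [Nat.cast_sub (by omega : k ≤ n)]
      ring
    have hmpos : (0 : ℝ) < (n : ℝ) - k + 1 := by
      rw [← hmcast]
      exact_mod_cast hm1
    have hstm : ((S.card : ℝ)) + ((T.card : ℝ)) = (n : ℝ) - k + 1 := by
      rw [← hmcast]
      exact_mod_cast hST
    -- eCount computations
    have hcS : eCount n k H (parts n k hkn S) = S.card := by
      rw [eCount_parts n k hk hkn H S hSsub]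
      congr 1
      rw [Finset.filter_eq_self]
      intro w hw
      rw [hS, Finset.mem_filter] at hw
      exact hw.2
    have hcT : eCount n k H (parts n k hkn T) = 0 := by
      rw [eCount_parts n k hk hkn H T hTsub]
      rw [Finset.card_eq_zero, Finset.filter_eq_empty_iff]
      intro w hw
      rw [hT, Finset.mem_filter] at hw
      exact hw.2
    rcases key_choice α ((n : ℝ) - k + 1) (S.card : ℝ) (T.card : ℝ) hα0 hα1
        (by positivity) (by positivity) hstm with hkey | hkey
    · -- use S as the last part
      have hP : (0 : ℝ) < (α * (1 - α)) ^ 2 * ((n : ℝ) - k + 1) :=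
        mul_pos (pow_pos (mul_pos hα0' hα1') 2) hmpos
      have hSpos : (0 : ℝ) < (S.card : ℝ) := by
        nlinarith [hP, hkey, mul_nonneg hA.le (sq_nonneg (1 - α))]
      have hSne : S.Nonempty := by
        rw [← Finset.card_pos]
        exact_mod_cast hSpos
      refine ⟨parts n k hkn S, parts_disjoint n k hkn S hSsub,
        parts_nonempty n k hkn S hSne, ?_⟩
      have hprod : ∏ i, (((parts n k hkn S) i).card : ℝ) = (S.card : ℝ) := by
        rw [← Nat.cast_prod, prod_parts n k hk hkn S]
      rw [hprod, hcS]
      have habs : |(S.card : ℝ) - α * (S.card : ℝ)| = (1 - α) * (S.card : ℝ) := by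
        rw [abs_of_nonneg (by nlinarith)]
        ring
      rw [habs, show (1 - α) * (S.card : ℝ) / Real.sqrt (S.card : ℝ)
          = (1 - α) * Real.sqrt (S.card : ℝ) from by rw [mul_div_assoc, Real.div_sqrt]]
      exact sqrt_step (α * (1 - α)) (1 - α) (α ^ 2 + (1 - α) ^ 2) ((n : ℝ) - k + 1)
        (S.card : ℝ) (mul_nonneg hα0 hα1'.le) hα1'.le hmpos.le hSpos.le hA hkey
    · -- use T as the last part
      have hP : (0 : ℝ) < (α * (1 - α)) ^ 2 * ((n : ℝ) - k + 1) :=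
        mul_pos (pow_pos (mul_pos hα0' hα1') 2) hmpos
      have hTpos : (0 : ℝ) < (T.card : ℝ) := by
        nlinarith [hP, hkey, mul_nonneg hA.le (sq_nonneg α)]
      have hTne : T.Nonempty := by
        rw [← Finset.card_pos]
        exact_mod_cast hTpos
      refine ⟨parts n k hkn T, parts_disjoint n k hkn T hTsub,
        parts_nonempty n k hkn T hTne, ?_⟩
      have hprod : ∏ i, (((parts n k hkn T) i).card : ℝ) = (T.card : ℝ) := by
        rw [← Nat.cast_prod, prod_parts n k hk hkn T]
      rw [hprod, hcT]
      have habs : |((0 : ℕ) : ℝ) - α * (T.card : ℝ)| = α * (T.card : ℝ) := by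
        rw [Nat.cast_zero, zero_sub, abs_neg, abs_of_nonneg (by positivity)]
      rw [habs, show α * (T.card : ℝ) / Real.sqrt (T.card : ℝ)
          = α * Real.sqrt (T.card : ℝ) from by rw [mul_div_assoc, Real.div_sqrt]]
      exact sqrt_step (α * (1 - α)) α (α ^ 2 + (1 - α) ^ 2) ((n : ℝ) - k + 1)
        (T.card : ℝ) (mul_nonneg hα0 hα1'.le) hα0 hmpos.le hTpos.le hA hkey
end
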